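/- Approximate evaluation at a KKT point: Let δ ∈ (0,1) and let (y,z) ∈ [0,1]^{3n−4} be a KKT point of the polynomial p constructed from the truncated-linear program. Then for every i ∈ {3,…,n}: (a) |(1/(2δ^i)) · ∂p_i/∂y_i(y,z)| ≤ (2Kδ)^{n+1−i}; (b) y_i = trunc(Σ_{j<i} a_{ij} y_j + c_i − (1/(2δ^i)) · ∂p_i/∂y_i(y,z)); and consequently (c) |y_i − trunc(Σ_{j<i} a_{ij} y_j + c_i)| ≤ (2Kδ)^{n+1−i}. -/

import Mathlib

noncomputable section

/-- Truncation to the unit interval. -/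
def trunc (z : ℝ) : ℝ := min 1 (max 0 z)

/-- The term `q_i` of the quadratic polynomial, implementing the `i`-th gate. -/
def qval (K : ℝ) (a : ℕ → ℕ → ℝ) (c : ℕ → ℝ) (i : ℕ) (y zp zm : ℕ → ℝ) : ℝ :=
  (y i + K * zp i - K * zm i - (∑ j ∈ Finset.Ico 1 i, a i j * y j) - c i) ^ 2
    + 2 * K ^ 2 * zp i * zm i + 2 * K * zp i * (1 - y i) + 2 * K * zm i * y i

/-- The quadratic polynomial `p(y,z) = δ^{n+1} y_n + Σ_{i=3}^n δ^i q_i(y,z)`. -/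
def pval (n : ℕ) (K δ : ℝ) (a : ℕ → ℕ → ℝ) (c : ℕ → ℝ) (y zp zm : ℕ → ℝ) : ℝ :=
  δ ^ (n + 1) * y n + ∑ i ∈ Finset.Icc 3 n, δ ^ i * qval K a c i y zp zm

/-- The partial derivative `∂p/∂y_k`. -/
def dpy (n : ℕ) (K δ : ℝ) (a : ℕ → ℕ → ℝ) (c : ℕ → ℝ) (k : ℕ) (y zp zm : ℕ → ℝ) : ℝ :=
  deriv (fun t => pval n K δ a c (Function.update y k t) zp zm) (y k)

/-- The partial derivative `∂p/∂z_k⁺`. -/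
def dpzp (n : ℕ) (K δ : ℝ) (a : ℕ → ℕ → ℝ) (c : ℕ → ℝ) (k : ℕ) (y zp zm : ℕ → ℝ) : ℝ :=
  deriv (fun t => pval n K δ a c y (Function.update zp k t) zm) (zp k)

/-- The partial derivative `∂p/∂z_k⁻`. -/
def dpzm (n : ℕ) (K δ : ℝ) (a : ℕ → ℕ → ℝ) (c : ℕ → ℝ) (k : ℕ) (y zp zm : ℕ → ℝ) : ℝ :=
  deriv (fun t => pval n K δ a c y zp (Function.update zm k t)) (zm k)

/-- `(y, z⁺, z⁻) ∈ [0,1]^{3n−4}` is a KKT point of the minimization of `p` over the box. -/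
def IsKKT (n : ℕ) (K δ : ℝ) (a : ℕ → ℕ → ℝ) (c : ℕ → ℝ) (y zp zm : ℕ → ℝ) : Prop :=
  (∀ i, 1 ≤ i → i ≤ n → y i ∈ Set.Icc (0 : ℝ) 1) ∧
  (∀ i, 3 ≤ i → i ≤ n → zp i ∈ Set.Icc (0 : ℝ) 1 ∧ zm i ∈ Set.Icc (0 : ℝ) 1) ∧
  (∀ i, 1 ≤ i → i ≤ n →
    (0 < y i → dpy n K δ a c i y zp zm ≤ 0) ∧ (y i < 1 → 0 ≤ dpy n K δ a c i y zp zm)) ∧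
  (∀ i, 3 ≤ i → i ≤ n →
    ((0 < zp i → dpzp n K δ a c i y zp zm ≤ 0) ∧ (zp i < 1 → 0 ≤ dpzp n K δ a c i y zp zm)) ∧
    ((0 < zm i → dpzm n K δ a c i y zp zm ≤ 0) ∧ (zm i < 1 → 0 ≤ dpzm n K δ a c i y zp zm)))

/-- The tail polynomial `p_i(y,z) = δ^{n+1} y_n + Σ_{ℓ=i+1}^n δ^ℓ q_ℓ(y,z)`. -/
def pival (n : ℕ) (K δ : ℝ) (a : ℕ → ℕ → ℝ) (c : ℕ → ℝ) (i : ℕ) (y zp zm : ℕ → ℝ) : ℝ :=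
  δ ^ (n + 1) * y n + ∑ l ∈ Finset.Icc (i + 1) n, δ ^ l * qval K a c l y zp zm

/-- The partial derivative `∂p_i/∂y_k`. -/
def dpiy (n : ℕ) (K δ : ℝ) (a : ℕ → ℕ → ℝ) (c : ℕ → ℝ) (i k : ℕ) (y zp zm : ℕ → ℝ) : ℝ :=
  deriv (fun t => pival n K δ a c i (Function.update y k t) zp zm) (y k)

def Sv (a : ℕ → ℕ → ℝ) (y : ℕ → ℝ) (i : ℕ) : ℝ := ∑ j ∈ Finset.Ico 1 i, a i j * y j

def gv (K : ℝ) (a : ℕ → ℕ → ℝ) (c : ℕ → ℝ) (y zp zm : ℕ → ℝ) (i : ℕ) : ℝ :=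
  y i + K * zp i - K * zm i - Sv a y i - c i

lemma abs_trunc_sub_trunc (u v : ℝ) : |trunc u - trunc v| ≤ |u - v| := by
  unfold trunc
  calc |min 1 (max 0 u) - min 1 (max 0 v)| ≤ max |(1:ℝ) - 1| |max 0 u - max 0 v| :=
        abs_min_sub_min_le_max _ _ _ _
    _ ≤ |u - v| := by
        simp only [sub_self, abs_zero]
        refine max_le (abs_nonneg _) ?_
        calc |max (0:ℝ) u - max 0 v| ≤ max |(0:ℝ) - 0| |u - v| := abs_max_sub_max_le_max _ _ _ _
          _ ≤ |u - v| := by simp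

section derivs
variable (K : ℝ) (a : ℕ → ℕ → ℝ) (c : ℕ → ℝ) (y zp zm : ℕ → ℝ)

lemma hasDerivAt_qval_lt {k l : ℕ} (hk1 : 1 ≤ k) (hkl : k < l) :
    HasDerivAt (fun t => qval K a c l (Function.update y k t) zp zm)
      (-2 * a l k * gv K a c y zp zm l) (y k) := by
  have hk : k ∈ Finset.Ico 1 l := Finset.mem_Ico.mpr ⟨hk1, hkl⟩
  have hne : l ≠ k := hkl.ne'
  set R := ∑ j ∈ (Finset.Ico 1 l).erase k, a l j * y j with hR
  have hsum : ∀ t : ℝ, (∑ j ∈ Finset.Ico 1 l, a l j * Function.update y k t j)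
      = a l k * t + R := by
    intro t
    rw [← Finset.add_sum_erase _ (fun j => a l j * Function.update y k t j) hk,
      Function.update_self]
    congr 1
    refine Finset.sum_congr rfl fun j hj => ?_
    rw [Function.update_of_ne (Finset.ne_of_mem_erase hj)]
  have hfun : (fun t => qval K a c l (Function.update y k t) zp zm)
      = fun t => (y l + K * zp l - K * zm l - (a l k * t + R) - c l) ^ 2
          + (2 * K ^ 2 * zp l * zm l + 2 * K * zp l * (1 - y l) + 2 * K * zm l * y l) := by
    funext t
    unfold qval
    rw [hsum t, Function.update_of_ne hne]
    ring
  rw [hfun]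
  have h1 : HasDerivAt (fun t : ℝ => y l + K * zp l - K * zm l - (a l k * t + R) - c l)
      (-(a l k)) (y k) := by
    have h0 := (((hasDerivAt_id (y k)).const_mul (a l k)).add_const R).const_sub
      (y l + K * zp l - K * zm l)
    have h0' := h0.sub_const (c l)
    simpa using h0'
  have h2 := (h1.pow 2).add_const
    (2 * K ^ 2 * zp l * zm l + 2 * K * zp l * (1 - y l) + 2 * K * zm l * y l)
  refine HasDerivAt.congr_deriv h2 ?_
  have hS : Sv a y l = a l k * y k + R := by
    rw [hR]
    unfold Sv
    rw [← Finset.add_sum_erase _ (fun j => a l j * y j) hk]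
  unfold gv
  rw [hS]
  push_cast
  ring

lemma hasDerivAt_qval_self (l : ℕ) :
    HasDerivAt (fun t => qval K a c l (Function.update y l t) zp zm)
      (2 * gv K a c y zp zm l - 2 * K * zp l + 2 * K * zm l) (y l) := by
  have hsum : ∀ t : ℝ, (∑ j ∈ Finset.Ico 1 l, a l j * Function.update y l t j) = Sv a y l := by
    intro t
    refine Finset.sum_congr rfl fun j hj => ?_
    rw [Function.update_of_ne (Finset.mem_Ico.mp hj).2.ne]
  have hfun : (fun t => qval K a c l (Function.update y l t) zp zm)
      = fun t => (t + (K * zp l - K * zm l - Sv a y l - c l)) ^ 2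
          + (2 * K ^ 2 * zp l * zm l) + (2 * K * zp l) * (1 - t) + (2 * K * zm l) * t := by
    funext t
    unfold qval
    rw [hsum t, Function.update_self]
    ring
  rw [hfun]
  have h1 := ((hasDerivAt_id (y l)).add_const (K * zp l - K * zm l - Sv a y l - c l)).pow 2
  have h2 := h1.add_const (2 * K ^ 2 * zp l * zm l)
  have h3 := ((hasDerivAt_id (y l)).const_sub 1).const_mul (2 * K * zp l)
  have h4 := (hasDerivAt_id (y l)).const_mul (2 * K * zm l)
  have h5 := (h2.add h3).add h4
  refine HasDerivAt.congr_deriv h5 ?_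
  unfold gv
  simp only [id_eq]
  push_cast
  ring

lemma qval_update_y_const {k l : ℕ} (hlk : l < k) :
    (fun t : ℝ => qval K a c l (Function.update y k t) zp zm)
      = fun _ => qval K a c l y zp zm := by
  funext t
  unfold qval
  rw [Function.update_of_ne hlk.ne]
  have hs : (∑ j ∈ Finset.Ico 1 l, a l j * Function.update y k t j)
      = ∑ j ∈ Finset.Ico 1 l, a l j * y j :=
    Finset.sum_congr rfl fun j hj => by
      rw [Function.update_of_ne ((Finset.mem_Ico.mp hj).2.trans hlk).ne]
  rw [hs]

lemma qval_update_zp_const {k l : ℕ} (hlk : l ≠ k) :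
    (fun t : ℝ => qval K a c l y (Function.update zp k t) zm)
      = fun _ => qval K a c l y zp zm := by
  funext t
  unfold qval
  rw [Function.update_of_ne hlk]

lemma qval_update_zm_const {k l : ℕ} (hlk : l ≠ k) :
    (fun t : ℝ => qval K a c l y zp (Function.update zm k t))
      = fun _ => qval K a c l y zp zm := by
  funext t
  unfold qval
  rw [Function.update_of_ne hlk]

lemma hasDerivAt_qval_zp_self (l : ℕ) :
    HasDerivAt (fun t => qval K a c l y (Function.update zp l t) zm)
      (2 * K * gv K a c y zp zm l + 2 * K ^ 2 * zm l + 2 * K * (1 - y l)) (zp l) := by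
  have hfun : (fun t => qval K a c l y (Function.update zp l t) zm)
      = fun t => (K * t + (y l - K * zm l - Sv a y l - c l)) ^ 2
          + (2 * K ^ 2 * zm l) * t + (2 * K * (1 - y l)) * t + (2 * K * zm l * y l) := by
    funext t
    unfold qval Sv
    rw [Function.update_self]
    ring
  rw [hfun]
  have h1 := (((hasDerivAt_id (zp l)).const_mul K).add_const
    (y l - K * zm l - Sv a y l - c l)).pow 2
  have h2 := h1.add ((hasDerivAt_id (zp l)).const_mul (2 * K ^ 2 * zm l))
  have h3 := h2.add ((hasDerivAt_id (zp l)).const_mul (2 * K * (1 - y l)))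
  have h4 := h3.add_const (2 * K * zm l * y l)
  refine HasDerivAt.congr_deriv h4 ?_
  unfold gv
  simp only [id_eq]
  push_cast
  ring

lemma hasDerivAt_qval_zm_self (l : ℕ) :
    HasDerivAt (fun t => qval K a c l y zp (Function.update zm l t))
      (2 * K ^ 2 * zp l + 2 * K * y l - 2 * K * gv K a c y zp zm l) (zm l) := by
  have hfun : (fun t => qval K a c l y zp (Function.update zm l t))
      = fun t => ((y l + K * zp l - Sv a y l - c l) - K * t) ^ 2
          + (2 * K ^ 2 * zp l) * t + (2 * K * y l) * t + (2 * K * zp l * (1 - y l)) := by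
    funext t
    unfold qval Sv
    rw [Function.update_self]
    ring
  rw [hfun]
  have h1 := (((hasDerivAt_id (zm l)).const_mul K).const_sub
    (y l + K * zp l - Sv a y l - c l)).pow 2
  have h2 := h1.add ((hasDerivAt_id (zm l)).const_mul (2 * K ^ 2 * zp l))
  have h3 := h2.add ((hasDerivAt_id (zm l)).const_mul (2 * K * y l))
  have h4 := h3.add_const (2 * K * zp l * (1 - y l))
  refine HasDerivAt.congr_deriv h4 ?_
  unfold gv
  simp only [id_eq]
  push_cast
  ring

end derivs
section formulas
variable (n : ℕ) (K δ : ℝ) (a : ℕ → ℕ → ℝ) (c : ℕ → ℝ) (y zp zm : ℕ → ℝ)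

lemma hasDerivAt_first (k : ℕ) :
    HasDerivAt (fun t : ℝ => δ ^ (n + 1) * Function.update y k t n)
      (if k = n then δ ^ (n + 1) else 0) (y k) := by
  by_cases h : k = n
  · subst h
    rw [if_pos rfl]
    have : (fun t : ℝ => δ ^ (k + 1) * Function.update y k t k)
        = fun t => δ ^ (k + 1) * t := by
      funext t; rw [Function.update_self]
    rw [this]
    simpa using (hasDerivAt_id (y k)).const_mul (δ ^ (k + 1))
  · have : (fun t : ℝ => δ ^ (n + 1) * Function.update y k t n)
        = fun _ => δ ^ (n + 1) * y n := by
      funext t; rw [Function.update_of_ne (Ne.symm h)]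
    rw [this, if_neg h]
    exact hasDerivAt_const _ _

lemma dpiy_eq {i : ℕ} (h3 : 3 ≤ i) :
    dpiy n K δ a c i i y zp zm = (if i = n then δ ^ (n + 1) else 0)
      + ∑ l ∈ Finset.Icc (i + 1) n, δ ^ l * (-2 * a l i * gv K a c y zp zm l) := by
  have hsum : HasDerivAt
      (fun t => ∑ l ∈ Finset.Icc (i + 1) n, δ ^ l * qval K a c l (Function.update y i t) zp zm)
      (∑ l ∈ Finset.Icc (i + 1) n, δ ^ l * (-2 * a l i * gv K a c y zp zm l)) (y i) := by
    apply HasDerivAt.fun_sum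
    intro l hl
    have hil : i < l := (Finset.mem_Icc.mp hl).1
    exact (hasDerivAt_qval_lt K a c y zp zm (by omega) hil).const_mul (δ ^ l)
  have h := (hasDerivAt_first n δ y i).fun_add hsum
  unfold dpiy
  have hfun : (fun t => pival n K δ a c i (Function.update y i t) zp zm)
      = (fun t => δ ^ (n + 1) * Function.update y i t n
          + ∑ l ∈ Finset.Icc (i + 1) n, δ ^ l * qval K a c l (Function.update y i t) zp zm) := rfl
  rw [hfun, h.deriv]

lemma dpy_eq {i : ℕ} (h3 : 3 ≤ i) (hin : i ≤ n) :
    dpy n K δ a c i y zp zm = (if i = n then δ ^ (n + 1) else 0)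
      + (δ ^ i * (2 * gv K a c y zp zm i - 2 * K * zp i + 2 * K * zm i)
        + ∑ l ∈ Finset.Icc (i + 1) n, δ ^ l * (-2 * a l i * gv K a c y zp zm l)) := by
  set d : ℕ → ℝ := fun l =>
    if l = i then δ ^ i * (2 * gv K a c y zp zm i - 2 * K * zp i + 2 * K * zm i)
    else if i < l then δ ^ l * (-2 * a l i * gv K a c y zp zm l) else 0 with hd
  have hsum : HasDerivAt
      (fun t => ∑ l ∈ Finset.Icc 3 n, δ ^ l * qval K a c l (Function.update y i t) zp zm)
      (∑ l ∈ Finset.Icc 3 n, d l) (y i) := by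
    apply HasDerivAt.fun_sum
    intro l hl
    rcases lt_trichotomy l i with hli | hli | hli
    · rw [hd]
      simp only [if_neg hli.ne, if_neg (by omega : ¬ i < l)]
      have hc : (fun t : ℝ => δ ^ l * qval K a c l (Function.update y i t) zp zm)
          = fun _ => δ ^ l * qval K a c l y zp zm := by
        funext t
        rw [congrFun (qval_update_y_const K a c y zp zm hli) t]
      rw [hc]
      simpa using hasDerivAt_const (y i) (δ ^ l * qval K a c l y zp zm)
    · subst hli
      rw [hd]
      simp only [if_pos rfl]
      exact (hasDerivAt_qval_self K a c y zp zm l).const_mul (δ ^ l)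
    · rw [hd]
      simp only [if_neg hli.ne', if_pos hli]
      exact (hasDerivAt_qval_lt K a c y zp zm (by omega) hli).const_mul (δ ^ l)
  have hsplit : ∑ l ∈ Finset.Icc 3 n, d l
      = δ ^ i * (2 * gv K a c y zp zm i - 2 * K * zp i + 2 * K * zm i)
        + ∑ l ∈ Finset.Icc (i + 1) n, δ ^ l * (-2 * a l i * gv K a c y zp zm l) := by
    have hunion : Finset.Icc 3 n = Finset.Icc 3 i ∪ Finset.Icc (i + 1) n := by
      ext x
      simp only [Finset.mem_Icc, Finset.mem_union]
      omega
    have hdisj : Disjoint (Finset.Icc 3 i) (Finset.Icc (i + 1) n) := by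
      simp only [Finset.disjoint_left, Finset.mem_Icc]
      omega
    rw [hunion, Finset.sum_union hdisj]
    congr 1
    · rw [Finset.sum_eq_single i]
      · simp [hd]
      · intro l hl hne
        rw [hd]
        simp only [if_neg hne, if_neg (by simp only [Finset.mem_Icc] at hl; omega : ¬ i < l)]
      · intro hni
        exact absurd (Finset.mem_Icc.mpr ⟨h3, le_refl i⟩) hni
    · refine Finset.sum_congr rfl fun l hl => ?_
      have hil : i < l := (Finset.mem_Icc.mp hl).1
      rw [hd]
      simp only [if_neg hil.ne', if_pos hil]
  have h := (hasDerivAt_first n δ y i).fun_add hsum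
  unfold dpy
  have hfun : (fun t => pval n K δ a c (Function.update y i t) zp zm)
      = (fun t => δ ^ (n + 1) * Function.update y i t n
          + ∑ l ∈ Finset.Icc 3 n, δ ^ l * qval K a c l (Function.update y i t) zp zm) := rfl
  rw [hfun, h.deriv, hsplit]

lemma dpzp_eq {i : ℕ} (h3 : 3 ≤ i) (hin : i ≤ n) :
    dpzp n K δ a c i y zp zm
      = δ ^ i * (2 * K * gv K a c y zp zm i + 2 * K ^ 2 * zm i + 2 * K * (1 - y i)) := by
  set d : ℕ → ℝ := fun l =>
    if l = i then δ ^ i * (2 * K * gv K a c y zp zm i + 2 * K ^ 2 * zm i + 2 * K * (1 - y i))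
    else 0 with hd
  have hsum : HasDerivAt
      (fun t => ∑ l ∈ Finset.Icc 3 n, δ ^ l * qval K a c l y (Function.update zp i t) zm)
      (∑ l ∈ Finset.Icc 3 n, d l) (zp i) := by
    apply HasDerivAt.fun_sum
    intro l hl
    by_cases hli : l = i
    · subst hli
      rw [hd]
      simp only [if_pos rfl]
      exact (hasDerivAt_qval_zp_self K a c y zp zm l).const_mul (δ ^ l)
    · rw [hd]
      simp only [if_neg hli]
      have hc : (fun t : ℝ => δ ^ l * qval K a c l y (Function.update zp i t) zm)
          = fun _ => δ ^ l * qval K a c l y zp zm := by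
        funext t
        rw [congrFun (qval_update_zp_const K a c y zp zm hli) t]
      rw [hc]
      simpa using hasDerivAt_const (zp i) (δ ^ l * qval K a c l y zp zm)
  have hsplit : ∑ l ∈ Finset.Icc 3 n, d l
      = δ ^ i * (2 * K * gv K a c y zp zm i + 2 * K ^ 2 * zm i + 2 * K * (1 - y i)) := by
    rw [Finset.sum_eq_single i]
    · simp [hd]
    · intro l hl hne
      rw [hd]; simp only [if_neg hne]
    · intro hni
      exact absurd (Finset.mem_Icc.mpr ⟨h3, hin⟩) hni
  have h := (hasDerivAt_const (zp i) (δ ^ (n + 1) * y n)).fun_add hsum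
  unfold dpzp
  have hfun : (fun t => pval n K δ a c y (Function.update zp i t) zm)
      = (fun t => δ ^ (n + 1) * y n
          + ∑ l ∈ Finset.Icc 3 n, δ ^ l * qval K a c l y (Function.update zp i t) zm) := rfl
  rw [hfun, h.deriv, hsplit, zero_add]

lemma dpzm_eq {i : ℕ} (h3 : 3 ≤ i) (hin : i ≤ n) :
    dpzm n K δ a c i y zp zm
      = δ ^ i * (2 * K ^ 2 * zp i + 2 * K * y i - 2 * K * gv K a c y zp zm i) := by
  set d : ℕ → ℝ := fun l =>
    if l = i then δ ^ i * (2 * K ^ 2 * zp i + 2 * K * y i - 2 * K * gv K a c y zp zm i)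
    else 0 with hd
  have hsum : HasDerivAt
      (fun t => ∑ l ∈ Finset.Icc 3 n, δ ^ l * qval K a c l y zp (Function.update zm i t))
      (∑ l ∈ Finset.Icc 3 n, d l) (zm i) := by
    apply HasDerivAt.fun_sum
    intro l hl
    by_cases hli : l = i
    · subst hli
      rw [hd]
      simp only [if_pos rfl]
      exact (hasDerivAt_qval_zm_self K a c y zp zm l).const_mul (δ ^ l)
    · rw [hd]
      simp only [if_neg hli]
      have hc : (fun t : ℝ => δ ^ l * qval K a c l y zp (Function.update zm i t))
          = fun _ => δ ^ l * qval K a c l y zp zm := by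
        funext t
        rw [congrFun (qval_update_zm_const K a c y zp zm hli) t]
      rw [hc]
      simpa using hasDerivAt_const (zm i) (δ ^ l * qval K a c l y zp zm)
  have hsplit : ∑ l ∈ Finset.Icc 3 n, d l
      = δ ^ i * (2 * K ^ 2 * zp i + 2 * K * y i - 2 * K * gv K a c y zp zm i) := by
    rw [Finset.sum_eq_single i]
    · simp [hd]
    · intro l hl hne
      rw [hd]; simp only [if_neg hne]
    · intro hni
      exact absurd (Finset.mem_Icc.mpr ⟨h3, hin⟩) hni
  have h := (hasDerivAt_const (zm i) (δ ^ (n + 1) * y n)).fun_add hsum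
  unfold dpzm
  have hfun : (fun t => pval n K δ a c y zp (Function.update zm i t))
      = (fun t => δ ^ (n + 1) * y n
          + ∑ l ∈ Finset.Icc 3 n, δ ^ l * qval K a c l y zp (Function.update zm i t)) := rfl
  rw [hfun, h.deriv, hsplit, zero_add]
end formulas

section kkt
variable {n : ℕ} {K δ : ℝ} {a : ℕ → ℕ → ℝ} {c : ℕ → ℝ} {y zp zm : ℕ → ℝ}

lemma dpy_eq' (h3 : 3 ≤ i) (hin : i ≤ n) (hδ0 : 0 < δ) :
    dpy n K δ a c i y zp zm
      = 2 * δ ^ i * (y i - (Sv a y i + c i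
          - 1 / (2 * δ ^ i) * dpiy n K δ a c i i y zp zm)) := by
  have hδi : (0:ℝ) < δ ^ i := pow_pos hδ0 i
  rw [dpy_eq n K δ a c y zp zm h3 hin, dpiy_eq n K δ a c y zp zm h3]
  unfold gv
  field_simp
  ring

lemma y_eq_trunc (h3 : 3 ≤ i) (hin : i ≤ n) (hδ0 : 0 < δ)
    (hkkt : IsKKT n K δ a c y zp zm) :
    y i = trunc (Sv a y i + c i - 1 / (2 * δ ^ i) * dpiy n K δ a c i i y zp zm) := by
  obtain ⟨hbox, hzbox, hyk, hzk⟩ := hkkt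
  have hδi : (0:ℝ) < δ ^ i := pow_pos hδ0 i
  obtain ⟨hy0, hy1⟩ := hbox i (by omega) hin
  set X := Sv a y i + c i - 1 / (2 * δ ^ i) * dpiy n K δ a c i i y zp zm with hX
  have hcond := hyk i (by omega) hin
  have hdpy : dpy n K δ a c i y zp zm = 2 * δ ^ i * (y i - X) := dpy_eq' h3 hin hδ0
  have h1 : 0 < y i → y i ≤ X := by
    intro h
    have := hcond.1 h
    rw [hdpy] at this
    nlinarith
  have h2 : y i < 1 → X ≤ y i := by
    intro h
    have := hcond.2 h
    rw [hdpy] at this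
    nlinarith
  unfold trunc
  rcases eq_or_lt_of_le hy0 with h0 | h0
  · have hXle : X ≤ 0 := by
      have := h2 (by rw [← h0]; norm_num)
      rwa [← h0] at this
    rw [← h0, max_eq_left hXle, min_eq_right zero_le_one]
  · rcases eq_or_lt_of_le hy1 with h1' | h1'
    · have hXge : 1 ≤ X := by
        have := h1 h0
        rwa [h1'] at this
      rw [h1', max_eq_right (le_trans zero_le_one hXge), min_eq_left hXge]
    · have : X = y i := le_antisymm (h2 h1') (h1 h0)
      rw [this, max_eq_right hy0, min_eq_right hy1]

lemma abs_Sc_le (hKb : ∀ i, 3 ≤ i → i ≤ n → (∑ j ∈ Finset.Ico 1 i, |a i j|) + |c i| ≤ K)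
    (hbox : ∀ i, 1 ≤ i → i ≤ n → y i ∈ Set.Icc (0 : ℝ) 1)
    (h3 : 3 ≤ i) (hin : i ≤ n) : |Sv a y i + c i| ≤ K := by
  have h1 : |Sv a y i| ≤ ∑ j ∈ Finset.Ico 1 i, |a i j| := by
    calc |Sv a y i| ≤ ∑ j ∈ Finset.Ico 1 i, |a i j * y j| := Finset.abs_sum_le_sum_abs _ _
      _ ≤ ∑ j ∈ Finset.Ico 1 i, |a i j| := by
        refine Finset.sum_le_sum fun j hj => ?_
        obtain ⟨hj1, hj2⟩ := Finset.mem_Ico.mp hj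
        obtain ⟨hy0, hy1⟩ := hbox j hj1 (by omega)
        rw [abs_mul]
        have hyj : |y j| ≤ 1 := abs_le.mpr ⟨by linarith, hy1⟩
        nlinarith [abs_nonneg (a i j)]
  calc |Sv a y i + c i| ≤ |Sv a y i| + |c i| := abs_add_le _ _
    _ ≤ (∑ j ∈ Finset.Ico 1 i, |a i j|) + |c i| := by linarith
    _ ≤ K := hKb i h3 hin

set_option maxHeartbeats 1000000 in
lemma abs_gv_le (h3 : 3 ≤ i) (hin : i ≤ n) (hδ0 : 0 < δ) (hK1 : 1 ≤ K)
    (hKb : ∀ i, 3 ≤ i → i ≤ n → (∑ j ∈ Finset.Ico 1 i, |a i j|) + |c i| ≤ K)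
    (hkkt : IsKKT n K δ a c y zp zm) :
    |gv K a c y zp zm i| ≤ |1 / (2 * δ ^ i) * dpiy n K δ a c i i y zp zm| := by
  obtain ⟨hbox, hzbox, hyk, hzk⟩ := hkkt
  have hδi : (0:ℝ) < δ ^ i := pow_pos hδ0 i
  have hK0 : (0:ℝ) < K := by linarith
  obtain ⟨⟨hzp0, hzp1⟩, ⟨hzm0, hzm1⟩⟩ := hzbox i h3 hin
  obtain ⟨hy0, hy1⟩ := hbox i (by omega) hin
  have hSc := abs_Sc_le hKb hbox h3 hin
  have hdzp := dpzp_eq n K δ a c y zp zm h3 hin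
  have hdzm := dpzm_eq n K δ a c y zp zm h3 hin
  have hdpy := dpy_eq' (K := K) (a := a) (c := c) (y := y) (zp := zp) (zm := zm) h3 hin hδ0
  obtain ⟨E, hE⟩ : ∃ E', E' = 1 / (2 * δ ^ i) * dpiy n K δ a c i i y zp zm := ⟨_, rfl⟩
  obtain ⟨g, hg⟩ : ∃ g', g' = gv K a c y zp zm i := ⟨_, rfl⟩
  rw [← hE] at hdpy
  rw [← hg] at hdzp hdzm
  rw [← hE, ← hg]
  have hSc1 := (abs_le.mp hSc).1
  have hSc2 := (abs_le.mp hSc).2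
  rcases lt_trichotomy g 0 with hgneg | hg0 | hgpos
  · have hinner : 0 < 2 * K ^ 2 * zp i + 2 * K * y i - 2 * K * g := by
      nlinarith [mul_nonneg (mul_nonneg (by norm_num : (0:ℝ) ≤ 2) (sq_nonneg K)) hzp0,
        mul_nonneg hK0.le hy0]
    have hdzm_pos : 0 < dpzm n K δ a c i y zp zm := by
      rw [hdzm]; exact mul_pos hδi hinner
    have hzme : zm i = 0 := by
      by_contra hne
      have h : 0 < zm i := lt_of_le_of_ne hzm0 (Ne.symm hne)
      have := ((hzk i h3 hin).2.1) h
      linarith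
    rcases eq_or_lt_of_le hy1 with h1' | h1'
    · have hinner2 : 2 * K * g + 2 * K ^ 2 * zm i + 2 * K * (1 - y i) < 0 := by
        rw [hzme, h1']; nlinarith
      have hdzp_neg : dpzp n K δ a c i y zp zm < 0 := by
        rw [hdzp]; exact mul_neg_of_pos_of_neg hδi hinner2
      have hzpe : zp i = 1 := by
        by_contra hne
        have h : zp i < 1 := lt_of_le_of_ne hzp1 hne
        have := ((hzk i h3 hin).1.2) h
        linarith
      have : 0 < g := by
        rw [hg]; unfold gv
        rw [hzpe, hzme, h1']
        have : Sv a y i + c i ≤ K := hSc2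
        linarith
      linarith
    · have hdpyge := (hyk i (by omega) hin).2 h1'
      rw [hdpy] at hdpyge
      have h6 : 0 ≤ y i - (Sv a y i + c i) + E := by nlinarith
      have h7 : y i - (Sv a y i + c i) = g - K * zp i := by
        rw [hg]; unfold gv; rw [hzme]; ring
      have h8 : -g ≤ E := by nlinarith [mul_nonneg hK0.le hzp0]
      calc |g| = -g := abs_of_neg hgneg
        _ ≤ E := h8
        _ ≤ |E| := le_abs_self E
  · rw [hg0]
    simp [abs_nonneg]
  · have hinner : 0 < 2 * K * g + 2 * K ^ 2 * zm i + 2 * K * (1 - y i) := by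
      nlinarith [mul_nonneg (mul_nonneg (by norm_num : (0:ℝ) ≤ 2) (sq_nonneg K)) hzm0,
        mul_nonneg hK0.le (by linarith : (0:ℝ) ≤ 1 - y i)]
    have hdzp_pos : 0 < dpzp n K δ a c i y zp zm := by
      rw [hdzp]; exact mul_pos hδi hinner
    have hzpe : zp i = 0 := by
      by_contra hne
      have h : 0 < zp i := lt_of_le_of_ne hzp0 (Ne.symm hne)
      have := ((hzk i h3 hin).1.1) h
      linarith
    rcases eq_or_lt_of_le hy0 with h0 | h0
    · have hinner2 : 2 * K ^ 2 * zp i + 2 * K * y i - 2 * K * g < 0 := by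
        rw [hzpe, ← h0]; nlinarith
      have hdzm_neg : dpzm n K δ a c i y zp zm < 0 := by
        rw [hdzm]; exact mul_neg_of_pos_of_neg hδi hinner2
      have hzme : zm i = 1 := by
        by_contra hne
        have h : zm i < 1 := lt_of_le_of_ne hzm1 hne
        have := ((hzk i h3 hin).2.2) h
        linarith
      have : g ≤ 0 := by
        rw [hg]; unfold gv
        rw [hzpe, hzme, ← h0]
        linarith
      linarith
    · have hdpyle := (hyk i (by omega) hin).1 h0
      rw [hdpy] at hdpyle
      have h6 : y i - (Sv a y i + c i) + E ≤ 0 := by nlinarith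
      have h7 : y i - (Sv a y i + c i) = g + K * zm i := by
        rw [hg]; unfold gv; rw [hzpe]; ring
      have h8 : g ≤ -E := by nlinarith [mul_nonneg hK0.le hzm0]
      calc |g| = g := abs_of_pos hgpos
        _ ≤ -E := h8
        _ ≤ |E| := neg_le_abs E

end kkt

lemma Ubound (n : ℕ) (K δ : ℝ) (hK1 : 1 ≤ K) (hδ0 : 0 < δ) :
    ∀ d i : ℕ, i + d = n →
      δ ^ (n + 1) + ∑ l ∈ Finset.Icc (i + 1) n, δ ^ l * (2 * K) * (2 * K * δ) ^ (n + 1 - l)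
        ≤ 2 * δ ^ i * (2 * K * δ) ^ (d + 1) := by
  intro d
  induction d with
  | zero =>
    intro i hi
    have hieq : i = n := by omega
    subst hieq
    rw [show Finset.Icc (i + 1) i = ∅ from Finset.Icc_eq_empty (by omega), Finset.sum_empty,
      add_zero, pow_one]
    have hp : (0:ℝ) < δ ^ i := pow_pos hδ0 i
    have h1 : δ ^ (i + 1) = δ ^ i * δ := pow_succ δ i
    rw [h1]
    nlinarith [mul_pos hp hδ0]
  | succ d ihd =>
    intro i hi
    have hins : Finset.Icc (i + 1) n = insert (i + 1) (Finset.Icc (i + 2) n) := by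
      ext x; simp only [Finset.mem_Icc, Finset.mem_insert]; omega
    have hnotmem : (i + 1) ∉ Finset.Icc (i + 2) n := by simp [Finset.mem_Icc]
    rw [hins, Finset.sum_insert hnotmem]
    have hIH := ihd (i + 1) (by omega)
    have hexp : n + 1 - (i + 1) = d + 1 := by omega
    rw [hexp]
    have hδi : (0:ℝ) < δ ^ i := pow_pos hδ0 i
    have h1 : δ ^ (i + 1) = δ ^ i * δ := pow_succ δ i
    have h2 : (2 * K * δ) ^ (d + 1 + 1) = (2 * K * δ) ^ (d + 1) * (2 * K * δ) := pow_succ _ _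
    have h3 : (0:ℝ) ≤ δ ^ i * δ * (2 * K * δ) ^ (d + 1) := by positivity
    have key : δ ^ (i + 1) * (2 * K) * (2 * K * δ) ^ (d + 1)
        + 2 * δ ^ (i + 1) * (2 * K * δ) ^ (d + 1)
        ≤ 2 * δ ^ i * (2 * K * δ) ^ (d + 1 + 1) := by
      rw [h1, h2]
      nlinarith [mul_nonneg (sub_nonneg.mpr hK1) h3]
    linarith

section main
variable {n : ℕ} {K δ : ℝ} {a : ℕ → ℕ → ℝ} {c : ℕ → ℝ} {y zp zm : ℕ → ℝ}

set_option maxHeartbeats 1000000 in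
lemma Ebound (hK1 : 1 ≤ K)
    (hKb : ∀ i, 3 ≤ i → i ≤ n → (∑ j ∈ Finset.Ico 1 i, |a i j|) + |c i| ≤ K)
    (hδ0 : 0 < δ) (hkkt : IsKKT n K δ a c y zp zm) :
    ∀ d i : ℕ, i + d = n → 3 ≤ i →
      |1 / (2 * δ ^ i) * dpiy n K δ a c i i y zp zm| ≤ (2 * K * δ) ^ (d + 1) := by
  intro d
  induction d using Nat.strong_induction_on with
  | _ d ih =>
    intro i hdi h3
    have hin : i ≤ n := by omega
    have hδi : (0:ℝ) < δ ^ i := pow_pos hδ0 i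
    have hK0 : (0:ℝ) < K := by linarith
    rw [abs_mul, abs_of_pos (show (0:ℝ) < 1 / (2 * δ ^ i) by positivity)]
    have hd1 : |dpiy n K δ a c i i y zp zm|
        ≤ δ ^ (n + 1) + ∑ l ∈ Finset.Icc (i + 1) n,
            δ ^ l * (2 * K) * (2 * K * δ) ^ (n + 1 - l) := by
      rw [dpiy_eq n K δ a c y zp zm h3]
      refine (abs_add_le _ _).trans (add_le_add ?_ ?_)
      · split_ifs
        · rw [abs_of_nonneg (by positivity)]
        · rw [abs_zero]; positivity
      · refine (Finset.abs_sum_le_sum_abs _ _).trans (Finset.sum_le_sum fun l hl => ?_)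
        obtain ⟨hl1, hl2⟩ := Finset.mem_Icc.mp hl
        have hl3 : 3 ≤ l := by omega
        have habs : |δ ^ l * (-2 * a l i * gv K a c y zp zm l)|
            = δ ^ l * 2 * (|a l i| * |gv K a c y zp zm l|) := by
          rw [abs_mul, abs_of_nonneg (pow_nonneg hδ0.le l), abs_mul, abs_mul]
          norm_num
          ring
        rw [habs]
        have hai : |a l i| ≤ K := by
          have hKl := hKb l hl3 hl2
          have hmem : i ∈ Finset.Ico 1 l := Finset.mem_Ico.mpr ⟨by omega, by omega⟩
          have hs := Finset.single_le_sum (f := fun j => |a l j|) (fun j _ => abs_nonneg _) hmem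
          have hc0 := abs_nonneg (c l)
          linarith
        have hgl : |gv K a c y zp zm l| ≤ (2 * K * δ) ^ (n + 1 - l) := by
          have hEl := ih (n - l) (by omega) l (by omega) hl3
          have hge := abs_gv_le hl3 hl2 hδ0 hK1 hKb hkkt
          have hexp : n - l + 1 = n + 1 - l := by omega
          rw [hexp] at hEl
          exact hge.trans hEl
        have hprod : |a l i| * |gv K a c y zp zm l| ≤ K * (2 * K * δ) ^ (n + 1 - l) :=
          mul_le_mul hai hgl (abs_nonneg _) hK0.le
        calc δ ^ l * 2 * (|a l i| * |gv K a c y zp zm l|)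
            ≤ δ ^ l * 2 * (K * (2 * K * δ) ^ (n + 1 - l)) := by
              refine mul_le_mul_of_nonneg_left hprod (by positivity)
          _ = δ ^ l * (2 * K) * (2 * K * δ) ^ (n + 1 - l) := by ring
    have hU := Ubound n K δ hK1 hδ0 d i hdi
    calc 1 / (2 * δ ^ i) * |dpiy n K δ a c i i y zp zm|
        ≤ 1 / (2 * δ ^ i) * (2 * δ ^ i * (2 * K * δ) ^ (d + 1)) := by
          refine mul_le_mul_of_nonneg_left (hd1.trans hU) (by positivity)
      _ = (2 * K * δ) ^ (d + 1) := by field_simp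

end main

/-- Approximate evaluation at a KKT point. -/
theorem kkt_approximate_evaluation (n : ℕ) (hn : 3 ≤ n) (a : ℕ → ℕ → ℝ) (c : ℕ → ℝ)
    (K : ℝ) (hK1 : 1 ≤ K)
    (hK : ∀ i, 3 ≤ i → i ≤ n → (∑ j ∈ Finset.Ico 1 i, |a i j|) + |c i| ≤ K)
    (δ : ℝ) (hδ : δ ∈ Set.Ioo (0 : ℝ) 1)
    (y zp zm : ℕ → ℝ) (hkkt : IsKKT n K δ a c y zp zm) :
    ∀ i, 3 ≤ i → i ≤ n →
      |1 / (2 * δ ^ i) * dpiy n K δ a c i i y zp zm| ≤ (2 * K * δ) ^ (n + 1 - i) ∧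
      y i = trunc ((∑ j ∈ Finset.Ico 1 i, a i j * y j) + c i
              - 1 / (2 * δ ^ i) * dpiy n K δ a c i i y zp zm) ∧
      |y i - trunc ((∑ j ∈ Finset.Ico 1 i, a i j * y j) + c i)| ≤ (2 * K * δ) ^ (n + 1 - i) := by
  intro i h3 hin
  obtain ⟨hδ0, hδ1⟩ := hδ
  have hd : i + (n - i) = n := by omega
  have hE := Ebound hK1 hK hδ0 hkkt (n - i) i hd h3
  have hexp : n - i + 1 = n + 1 - i := by omega
  rw [hexp] at hE
  have hSv : Sv a y i = ∑ j ∈ Finset.Ico 1 i, a i j * y j := rfl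
  rw [← hSv]
  have hb := y_eq_trunc h3 hin hδ0 hkkt
  refine ⟨hE, hb, ?_⟩
  have heq : Sv a y i + c i - 1 / (2 * δ ^ i) * dpiy n K δ a c i i y zp zm - (Sv a y i + c i)
      = -(1 / (2 * δ ^ i) * dpiy n K δ a c i i y zp zm) := by ring
  calc |y i - trunc (Sv a y i + c i)|
      = |trunc (Sv a y i + c i - 1 / (2 * δ ^ i) * dpiy n K δ a c i i y zp zm)
          - trunc (Sv a y i + c i)| := by rw [← hb]
    _ ≤ |Sv a y i + c i - 1 / (2 * δ ^ i) * dpiy n K δ a c i i y zp zm - (Sv a y i + c i)| :=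
        abs_trunc_sub_trunc _ _
    _ = |1 / (2 * δ ^ i) * dpiy n K δ a c i i y zp zm| := by rw [heq, abs_neg]
    _ ≤ (2 * K * δ) ^ (n + 1 - i) := hE
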